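/- On CFK^∞(4_1), the F2[U,U^{-1}]-linear map ι defined on generators by ι(a) = a + x, ι(b) = U^{-1}c, ι(c) = Ub, ι(e) = e, ι(x) = e + x is a chain map (ι∂ = ∂ι) that preserves the homological grading M, and every term of ι(y) has planar coordinates coordinatewise ≤ the transpose (j,i) of the planar coordinates (i,j) of y (ι is skew-filtered). Moreover ι^2 = σ, where σ = Id + U^{-1}ΦΨ is the Sarkar map of this complex, which here satisfies σ(a) = a + e and σ(b) = b, σ(c) = c, σ(e) = e, σ(x) = x. In particular ι^4 = Id. -/
import Mathlib


/- STATEMENT 3: on CFK^∞(4_1) (free over F2[U,U⁻¹] on a, b, c, e, x with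
∂a = Ub + c, ∂b = e, ∂c = Ue, ∂e = ∂x = 0), the map ι with ι(a) = a + x,
ι(b) = U⁻¹c, ι(c) = Ub, ι(e) = e, ι(x) = e + x is a grading-preserving,
skew-filtered chain map with ι² = σ (the Sarkar map σ = Id + U⁻¹ΦΨ, which
here satisfies σ(a) = a + e and σ = Id on b, c, e, x); in particular
ι⁴ = Id. -/

open LaurentPolynomial

noncomputable section

/-- F2[U, U⁻¹] -/
abbrev L2 : Type := LaurentPolynomial (ZMod 2)

/-- the variable U = T 1 -/
def UL : L2 := T 1

/-- the i-th free generator -/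
def gen {n : ℕ} (i : Fin n) : Fin n → L2 := Pi.single i 1

/-- the F2[U,U⁻¹]-linear map sending the i-th generator to `v i` -/
def mkL {n : ℕ} (v : Fin n → (Fin n → L2)) : (Fin n → L2) →ₗ[L2] (Fin n → L2) :=
  (Pi.basisFun L2 (Fin n)).constr ℕ v

/-- `x` is homogeneous of homological degree `r`: it is an F2-combination of
elements U^k·(i-th generator) with M i - 2k = r. -/
def HomogL {n : ℕ} (M : Fin n → ℤ) (r : ℤ) (x : Fin n → L2) : Prop :=
  x ∈ Submodule.span (ZMod 2)
    {v : Fin n → L2 | ∃ (i : Fin n) (k : ℤ), M i - 2 * k = r ∧ v = (T k : L2) • gen i}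

/-- every term of `x` has planar coordinates coordinatewise ≤ `st`, where the
i-th generator sits at `P i` and U lowers both coordinates by 1. -/
def BelowL {n : ℕ} (P : Fin n → ℤ × ℤ) (st : ℤ × ℤ) (x : Fin n → L2) : Prop :=
  x ∈ Submodule.span (ZMod 2)
    {v : Fin n → L2 | ∃ (i : Fin n) (k : ℤ),
      (P i).1 - k ≤ st.1 ∧ (P i).2 - k ≤ st.2 ∧ v = (T k : L2) • gen i}

/- generators: a = 0, b = 1, c = 2, e = 3, x = 4 -/

/-- the differential of CFK^∞(4_1) -/
def d : (Fin 5 → L2) →ₗ[L2] (Fin 5 → L2) :=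
  mkL ![UL • gen 1 + gen 2, gen 3, UL • gen 3, 0, 0]

/-- homological gradings -/
def M : Fin 5 → ℤ := ![0, 1, -1, 0, 0]

/-- planar bigradings -/
def P : Fin 5 → ℤ × ℤ := ![(0, 0), (0, 1), (0, -1), (0, 0), (0, 0)]

/-- the map ι -/
def iota : (Fin 5 → L2) →ₗ[L2] (Fin 5 → L2) :=
  mkL ![gen 0 + gen 4, (T (-1) : L2) • gen 2, UL • gen 1, gen 3, gen 3 + gen 4]

/-- Φ = Σ_{p odd} ∂_{p0} : the components of ∂ lowering the first planar
coordinate by an odd amount and preserving the second -/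
def Phi : (Fin 5 → L2) →ₗ[L2] (Fin 5 → L2) :=
  mkL ![UL • gen 1, 0, UL • gen 3, 0, 0]

/-- Ψ = Σ_{q odd} ∂_{0q} : the components of ∂ preserving the first planar
coordinate and lowering the second by an odd amount -/
def Psi : (Fin 5 → L2) →ₗ[L2] (Fin 5 → L2) :=
  mkL ![gen 2, gen 3, 0, 0, 0]

/-- the Sarkar map σ = Id + U⁻¹(Φ ∘ Ψ) -/
def sigma : (Fin 5 → L2) →ₗ[L2] (Fin 5 → L2) :=
  LinearMap.id + (T (-1) : L2) • (Phi ∘ₗ Psi)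


-- auxiliary lemmas

lemma two_eq_zero_L2 : (2 : L2) = 0 := by
  rw [show (2:L2) = C 2 from (map_ofNat C 2).symm, show (2:ZMod 2) = 0 from rfl, map_zero]

lemma add_self_L2 {n : ℕ} (y : Fin n → L2) : y + y = 0 := by
  rw [← two_smul L2 y, two_eq_zero_L2, zero_smul]

lemma mkL_gen {n : ℕ} (v : Fin n → (Fin n → L2)) (i : Fin n) : mkL v (gen i) = v i := by
  have h : Pi.basisFun L2 (Fin n) i = gen i := by
    ext j; simp [gen, Pi.basisFun_apply]
  rw [mkL, ← h, Module.Basis.constr_basis]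

lemma lm_ext {n : ℕ} {f g : (Fin n → L2) →ₗ[L2] (Fin n → L2)}
    (h : ∀ i, f (gen i) = g (gen i)) : f = g := by
  apply Module.Basis.ext (Pi.basisFun L2 (Fin n))
  intro i
  have hb : Pi.basisFun L2 (Fin n) i = gen i := by
    ext j; simp [gen, Pi.basisFun_apply]
  rw [hb]; exact h i

lemma UL_Tneg {n : ℕ} (y : Fin n → L2) : UL • ((T (-1) : L2) • y) = y := by
  rw [smul_smul, UL, ← T_add]; norm_num

lemma Tneg_UL {n : ℕ} (y : Fin n → L2) : (T (-1) : L2) • (UL • y) = y := by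
  rw [smul_smul, UL, ← T_add]; norm_num

lemma T_smul_T {n : ℕ} (k k' : ℤ) (y : Fin n → L2) :
    (T k : L2) • ((T k' : L2) • y) = (T (k + k') : L2) • y := by
  rw [smul_smul, ← T_add]

lemma gen_eq_T_smul {n : ℕ} (i : Fin n) : gen i = (T 0 : L2) • gen i := by
  rw [T_zero, one_smul]

lemma mem_homog {n : ℕ} {M : Fin n → ℤ} {r : ℤ} (i : Fin n) (k : ℤ)
    (h : M i - 2 * k = r) : HomogL M r ((T k : L2) • gen i) :=
  Submodule.subset_span ⟨i, k, h, rfl⟩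

lemma mem_below {n : ℕ} {P : Fin n → ℤ × ℤ} {st : ℤ × ℤ} (i : Fin n) (k : ℤ)
    (h1 : (P i).1 - k ≤ st.1) (h2 : (P i).2 - k ≤ st.2) :
    BelowL P st ((T k : L2) • gen i) :=
  Submodule.subset_span ⟨i, k, h1, h2, rfl⟩

theorem stmt_3 :
    -- CFK^∞(4_1) is a chain complex
    d ∘ₗ d = 0 ∧
    -- ι is a chain map
    iota ∘ₗ d = d ∘ₗ iota ∧
    -- ι preserves the homological grading M
    (∀ (r : ℤ) (x : Fin 5 → L2), HomogL M r x → HomogL M r (iota x)) ∧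
    -- ι is skew-filtered
    (∀ i : Fin 5, BelowL P ((P i).2, (P i).1) (iota (gen i))) ∧
    -- ι² = σ, the Sarkar map
    iota ∘ₗ iota = sigma ∧
    -- here σ(a) = a + e and σ fixes b, c, e, x
    sigma (gen 0) = gen 0 + gen 3 ∧ sigma (gen 1) = gen 1 ∧
    sigma (gen 2) = gen 2 ∧ sigma (gen 3) = gen 3 ∧ sigma (gen 4) = gen 4 ∧
    -- in particular ι⁴ = Id
    iota ∘ₗ iota ∘ₗ iota ∘ₗ iota = LinearMap.id := by
  have hdd : d ∘ₗ d = 0 := by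
    apply lm_ext; intro i; fin_cases i <;>
      simp [d, mkL_gen, add_self_L2]
  have hcomm : iota ∘ₗ d = d ∘ₗ iota := by
    apply lm_ext; intro i; fin_cases i <;>
      simp [d, iota, mkL_gen, UL_Tneg, Tneg_UL, add_comm]
  have hsq : iota ∘ₗ iota = sigma := by
    apply lm_ext; intro i; fin_cases i <;>
      simp [iota, sigma, Phi, Psi, mkL_gen, UL_Tneg, Tneg_UL] <;>
      abel_nf <;> simp [add_self_L2, two_smul, ← add_assoc]
  have hs0 : sigma (gen 0) = gen 0 + gen 3 := by
    simp [sigma, Phi, Psi, mkL_gen, Tneg_UL]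
  have hs1 : sigma (gen 1) = gen 1 := by simp [sigma, Phi, Psi, mkL_gen]
  have hs2 : sigma (gen 2) = gen 2 := by simp [sigma, Phi, Psi, mkL_gen]
  have hs3 : sigma (gen 3) = gen 3 := by simp [sigma, Phi, Psi, mkL_gen]
  have hs4 : sigma (gen 4) = gen 4 := by simp [sigma, Phi, Psi, mkL_gen]
  refine ⟨hdd, hcomm, ?_, ?_, hsq, hs0, hs1, hs2, hs3, hs4, ?_⟩
  · intro r x hx
    induction hx using Submodule.span_induction with
    | mem v hv =>
      obtain ⟨i, k, hk, rfl⟩ := hv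
      rw [map_smul]
      fin_cases i <;> simp [iota, mkL_gen, M, Matrix.cons_val_zero, Matrix.cons_val_one] at hk ⊢ <;>
        (try simp only [smul_add, T_smul_T])
      · exact Submodule.add_mem _ (mem_homog 0 k (by simp [M]; omega))
          (mem_homog 4 k (by simp [M]; omega))
      · exact mem_homog 2 (k + -1) (by simp [M]; omega)
      · rw [show UL • gen 1 = (T 1 : L2) • gen 1 from rfl, T_smul_T]
        exact mem_homog 1 (k + 1) (by simp [M]; omega)
      · exact mem_homog 3 k (by simp [M]; omega)
      · exact Submodule.add_mem _ (mem_homog 3 k (by simp [M]; omega))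
          (mem_homog 4 k (by simp [M]; omega))
    | zero => rw [map_zero]; exact Submodule.zero_mem _
    | add y z _ _ hy hz => rw [map_add]; exact Submodule.add_mem _ hy hz
    | smul c y _ hy => rw [LinearMap.map_smul_of_tower]; exact Submodule.smul_mem _ c hy
  · intro i
    fin_cases i <;> simp only [iota, mkL_gen]
    · rw [show gen 0 + gen 4 = (T 0 : L2) • gen 0 + (T 0 : L2) • gen 4 by
        rw [← gen_eq_T_smul, ← gen_eq_T_smul]]
      exact Submodule.add_mem _ (mem_below 0 0 (by simp [P]) (by simp [P]))
        (mem_below 4 0 (by simp [P]) (by simp [P]))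
    · exact mem_below 2 (-1) (by simp [P]) (by simp [P])
    · exact mem_below 1 1 (by simp [P]) (by simp [P])
    · rw [gen_eq_T_smul 3]; exact mem_below 3 0 (by simp [P]) (by simp [P])
    · rw [show gen 3 + gen 4 = (T 0 : L2) • gen 3 + (T 0 : L2) • gen 4 by
        rw [← gen_eq_T_smul, ← gen_eq_T_smul]]
      exact Submodule.add_mem _ (mem_below 3 0 (by simp [P]) (by simp [P]))
        (mem_below 4 0 (by simp [P]) (by simp [P]))
  · have hss : sigma ∘ₗ sigma = LinearMap.id := by
      apply lm_ext; intro i; fin_cases i <;>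
        simp [LinearMap.comp_apply, hs0, hs1, hs2, hs3, hs4, map_add, add_self_L2, add_assoc]
    calc iota ∘ₗ iota ∘ₗ iota ∘ₗ iota = (iota ∘ₗ iota) ∘ₗ (iota ∘ₗ iota) := by
          rw [LinearMap.comp_assoc]
      _ = sigma ∘ₗ sigma := by rw [hsq]
      _ = LinearMap.id := hss
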